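/- arXiv:2403.01939 — 3 statements merged into one kernel-verified Lean document; each statement's English description precedes it below -/
import Mathlib

section
/- In the category of sets, an object T is tiny (i.e., the internal hom functor (T → −) : Set → Set has a right adjoint) if and only if T is a singleton (terminal object). -/
open CategoryTheory CategoryTheory.Limits

universe u

/-- In the category of sets, an object `T` is tiny (the functor `(T → −)` has a right
adjoint) if and only if `T` is a singleton. -/
theorem tiny_in_Set_iff_singleton (T : Type u) :
    (∃ R : Type u ⥤ Type u, Nonempty (coyoneda.obj (Opposite.op T) ⊣ R)) ↔
      Nonempty (Unique T) := by
  constructor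
  · rintro ⟨R, ⟨adj⟩⟩
    set L := coyoneda.obj (Opposite.op T)
    have : PreservesColimitsOfSize.{u, u} L := adj.leftAdjoint_preservesColimits
    -- T is nonempty: L preserves the initial object PEmpty
    have hinit : IsInitial (L.obj PEmpty.{u+1}) :=
      Types.isInitialPunit.isInitialObj L _
    have hne : Nonempty T := by
      by_contra h
      have he : IsEmpty (L.obj PEmpty.{u+1}) :=
        (Types.initial_iff_empty _).mp ⟨hinit⟩
      exact he.elim (TypeCat.ofHom fun t => (h ⟨t⟩).elim)
    -- T is a subsingleton: L preserves the binary coproduct PUnit ⊕ PUnit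
    have hsub : ∀ a b : T, a = b := by
      intro a b
      classical
      have hc : IsColimit (L.mapCocone (Types.binaryCoproductCocone PUnit.{u+1} PUnit)) :=
        isColimitOfPreserves L (Types.binaryCoproductColimit _ _)
      set f : T → PUnit.{u+1} ⊕ PUnit.{u+1} :=
        fun t => if t = a then Sum.inl PUnit.unit else Sum.inr PUnit.unit with hf
      obtain ⟨⟨j⟩, y, hy⟩ := Types.jointly_surjective _ hc (TypeCat.ofHom f : L.obj (PUnit.{u+1} ⊕ PUnit.{u+1}))
      cases j with
      | left =>
        by_contra hab
        have hb : (Sum.inl PUnit.unit : PUnit.{u+1} ⊕ PUnit.{u+1}) = f b :=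
          congr_arg (fun g => TypeCat.homEquiv g b) hy
        simp only [hf] at hb
        rw [if_neg (fun h => hab h.symm)] at hb
        exact Sum.inl_ne_inr hb
      | right =>
        have ha : (Sum.inr PUnit.unit : PUnit.{u+1} ⊕ PUnit.{u+1}) = f a :=
          congr_arg (fun g => TypeCat.homEquiv g a) hy
        simp only [hf, if_pos rfl] at ha
        exact (Sum.inr_ne_inl ha).elim
    exact ⟨@Unique.mk' T ⟨hne.some⟩ ⟨fun a b => hsub a b⟩⟩
  · rintro ⟨hu⟩
    refine ⟨𝟭 (Type u), ⟨Adjunction.ofNatIsoLeft Adjunction.id ?_⟩⟩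
    exact (NatIso.ofComponents (fun X => Equiv.toIso (TypeCat.homEquiv.trans (Equiv.funUnique T X)))
      (fun _ => rfl)).symm
end

section
/- For any small category C with a chosen object c, the representable presheaf y(c) is tiny in the presheaf category PSh(C) when C has finite products: the functor (y(c) ⇒ −) given by exponentiation by y(c) has a right adjoint, whose value on a presheaf Y at object d is the set of natural transformations from the exponential (y(c) ⇒ y(d)) to Y. -/
open CategoryTheory CategoryTheory.Limits

universe u

/-- For a small category `C` with finite products, the representable presheaf `y(c)` is
tiny in `PSh(C)`: the exponential functor `(y(c) ⇒ −)` has a right adjoint `R`, whose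
value on a presheaf `Y` at an object `d` is the set of natural transformations
`(y(c) ⇒ y(d)) ⟶ Y`. -/
theorem representable_tiny_in_presheaves (C : Type u) [SmallCategory C]
    [HasFiniteProducts C] (c : C) :
    ∃ R : (Cᵒᵖ ⥤ Type u) ⥤ (Cᵒᵖ ⥤ Type u),
      Nonempty (ihom (yoneda.obj c) ⊣ R) ∧
      ∀ (Y : Cᵒᵖ ⥤ Type u) (d : Cᵒᵖ),
        Nonempty ((R.obj Y).obj d ≃ ((ihom (yoneda.obj c)).obj (yoneda.obj d.unop) ⟶ Y)) := by
  classical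
  letI : CartesianMonoidalCategory C := CartesianMonoidalCategory.ofHasFiniteProducts
  -- the functor `d ↦ c ⊗ d` on `C`
  let F : C ⥤ C := (MonoidalCategory.curriedTensor C).obj c
  -- yoneda sends `c ⊗ d` to `y c ⊗ y d`
  let e1 : F ⋙ yoneda ≅ yoneda ⋙ MonoidalCategory.tensorLeft (yoneda.obj c) :=
    CartesianMonoidalCategory.prodComparisonNatIso yoneda c
  haveI : PreservesColimitsOfSize.{u, u} (MonoidalCategory.tensorLeft (yoneda.obj c)) :=
    (ihom.adjunction (yoneda.obj c)).leftAdjoint_preservesColimits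
  haveI : PreservesColimitsOfSize.{u, u} (F.op.lan :
      (Cᵒᵖ ⥤ Type u) ⥤ (Cᵒᵖ ⥤ Type u)) :=
    (F.op.lanAdjunction (Type u)).leftAdjoint_preservesColimits
  -- both `tensorLeft (y c)` and `F.op.lan` are colimit-preserving extensions of `F ⋙ yoneda`
  let e2 : MonoidalCategory.tensorLeft (yoneda.obj c) ≅ F.op.lan :=
    (Presheaf.uniqueExtensionAlongULiftYoneda.{u, u, u, u, u + 1} (MonoidalCategory.tensorLeft (yoneda.obj c))
      ((Functor.isoWhiskerLeft F (uliftYonedaIsoYoneda : uliftYoneda.{u} ≅ yoneda) ≪≫ e1 ≪≫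
        Functor.isoWhiskerRight (uliftYonedaIsoYoneda : uliftYoneda.{u} ≅ yoneda).symm _ :
          F ⋙ uliftYoneda.{u} ≅ uliftYoneda.{u} ⋙ MonoidalCategory.tensorLeft (yoneda.obj c)))) ≪≫
      (Presheaf.uniqueExtensionAlongULiftYoneda.{u, u, u, u, u + 1} F.op.lan
        (Presheaf.compULiftYonedaIsoULiftYonedaCompLan.{u, u, u, u, u} F :
          F ⋙ uliftYoneda.{u} ≅ uliftYoneda.{u} ⋙ F.op.lan)).symm
  -- hence `exp (y c)` is isomorphic to precomposition with `F.op`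
  let adj1 : MonoidalCategory.tensorLeft (yoneda.obj c) ⊣
      (Functor.whiskeringLeft Cᵒᵖ Cᵒᵖ (Type u)).obj F.op :=
    (F.op.lanAdjunction (Type u)).ofNatIsoLeft e2.symm
  let e3 : ihom (yoneda.obj c) ≅ (Functor.whiskeringLeft Cᵒᵖ Cᵒᵖ (Type u)).obj F.op :=
    Adjunction.rightAdjointUniq (ihom.adjunction (yoneda.obj c)) adj1
  -- so it has the right Kan extension along `F.op` as a right adjoint
  let adjR : ihom (yoneda.obj c) ⊣ F.op.ran :=
    (F.op.ranAdjunction (Type u)).ofNatIsoLeft e3.symm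
  refine ⟨F.op.ran, ⟨adjR⟩, fun Y d => ⟨?_⟩⟩
  exact yonedaEquiv.symm.trans (adjR.homEquiv (yoneda.obj d.unop) Y).symm
end

section
/- In Martin-Löf type theory with a type T, binary coproducts, and the tiny-object structure (a right adjoint √ to T → −) satisfying the dependent adjointness equivalence, the canonical map split : ((T → A) + (T → B)) → (T → A + B) defined by case analysis is an equivalence, for any types A and B. -/
open CategoryTheory

universe u

/-- If `T` is tiny in the category of sets (i.e. `(T → −)` has a right adjoint), then
for any types `A`, `B` the canonical map
`split : (T → A) ⊕ (T → B) → (T → A ⊕ B)`, defined by case analysis and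
post-composition with the coproduct injections, is an equivalence (a bijection). -/
theorem split_is_equiv_of_tiny (T : Type u)
    (h : ∃ R : Type u ⥤ Type u, Nonempty (coyoneda.obj (Opposite.op T) ⊣ R))
    (A B : Type u) :
    Function.Bijective
      (Sum.elim (fun f : T → A => (fun t => Sum.inl (f t) : T → A ⊕ B))
                (fun g : T → B => fun t => Sum.inr (g t))) := by
  obtain ⟨R, ⟨adj⟩⟩ := h
  set F := coyoneda.obj (Opposite.op T) with hF
  haveI : Limits.PreservesColimitsOfSize.{0, 0} F := adj.leftAdjoint_preservesColimits
  have l1 : Limits.IsColimit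
      (Limits.BinaryCofan.mk (F.map (TypeCat.ofHom Sum.inl : A ⟶ A ⊕ B)) (F.map (TypeCat.ofHom Sum.inr : B ⟶ A ⊕ B))) :=
    Limits.mapIsColimitOfPreservesOfIsColimit F _ _ (Limits.Types.binaryCoproductColimit A B)
  have e := ((Limits.Types.binaryCoproductColimit (T ⟶ A) (T ⟶ B)).coconePointUniqueUpToIso
    l1).toEquiv.bijective
  have key : Sum.elim (fun f : T → A => (fun t => Sum.inl (f t) : T → A ⊕ B))
                (fun g : T → B => fun t => Sum.inr (g t)) =
      TypeCat.homEquiv ∘ ((Limits.Types.binaryCoproductColimit (T ⟶ A) (T ⟶ B)).coconePointUniqueUpToIso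
    l1).toEquiv ∘ Sum.map TypeCat.homEquiv.symm TypeCat.homEquiv.symm := by
    funext x
    rcases x with f | g <;> rfl
  rw [key]
  exact TypeCat.homEquiv.bijective.comp (e.comp (Equiv.sumCongr TypeCat.homEquiv.symm TypeCat.homEquiv.symm).bijective)
end
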